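/- Let p ∈ (0,1), z ∈ (0,1), a ∈ L^∞(0,1) with a > 0 a.e. on (0,z) and a < 0 a.e. on (z,1), and let μ₁ > 0 be the principal eigenvalue of -φ'' = μ a φ on (0,z) with Dirichlet conditions φ(0)=φ(z)=0, with positive eigenfunction φ₁. Choose c > 0 with μ₁ (c φ₁(x))^{1-p} ≤ 1 for all x ∈ [0,z], and define α(x) = c φ₁(x) for 0 ≤ x ≤ z and α(x) = c φ₁'(z)(x - z) for z < x ≤ 1. Then α ∈ W^{2,∞}(0,1), α'(0) > 0 > α'(1), and -α''(x) ≤ a(x)|α(x)|^p sgn(α(x)) a.e. in (0,1); i.e., α is a subsolution of -v'' = a |v|^p sgn v with Neumann conditions. -/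

import Mathlib

open Filter Set MeasureTheory

theorem stmt15 (a : ℝ → ℝ) (p z μ₁ c : ℝ) (φ₁ φ₁' φ₁'' : ℝ → ℝ)
    (hp : p ∈ Ioo (0:ℝ) 1) (hz : z ∈ Ioo (0:ℝ) 1)
    (habd : ∃ C, ∀ᵐ x ∂(volume.restrict (Ioo (0:ℝ) 1)), |a x| ≤ C)
    (hapos : ∀ᵐ x ∂(volume.restrict (Ioo (0:ℝ) z)), 0 < a x)
    (haneg : ∀ᵐ x ∂(volume.restrict (Ioo z 1)), a x < 0)
    (hμ₁ : 0 < μ₁)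
    (hd1 : ∀ x ∈ Icc (0:ℝ) z, HasDerivAt φ₁ (φ₁' x) x)
    (hd2 : ∀ x ∈ Icc (0:ℝ) z, HasDerivAt φ₁' (φ₁'' x) x)
    (hc : ContinuousOn φ₁' (Icc 0 z))
    (heig : ∀ᵐ x ∂(volume.restrict (Ioo (0:ℝ) z)),
      -φ₁'' x = μ₁ * a x * φ₁ x)
    (hφbc : φ₁ 0 = 0 ∧ φ₁ z = 0)
    (hφpos : ∀ x ∈ Ioo (0:ℝ) z, 0 < φ₁ x)
    (hφ'0 : 0 < φ₁' 0) (hφ'z : φ₁' z < 0)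
    (hcpos : 0 < c)
    (hcsmall : ∀ x ∈ Icc (0:ℝ) z, μ₁ * (c * φ₁ x) ^ (1 - p) ≤ 1) :
    let α : ℝ → ℝ := fun x => if x ≤ z then c * φ₁ x else c * φ₁' z * (x - z)
    let α' : ℝ → ℝ := fun x => if x ≤ z then c * φ₁' x else c * φ₁' z
    let α'' : ℝ → ℝ := fun x => if x ≤ z then c * φ₁'' x else 0
    (∀ x ∈ Icc (0:ℝ) 1, HasDerivAt α (α' x) x) ∧
    0 < α' 0 ∧ α' 1 < 0 ∧
    (∀ x ∈ Icc (0:ℝ) 1, x ≠ z → HasDerivAt α' (α'' x) x) ∧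
    (∃ C, ∀ x ∈ Icc (0:ℝ) 1, |α'' x| ≤ C) ∧
    (∀ᵐ x ∂(volume.restrict (Ioo (0:ℝ) 1)),
      -α'' x ≤ a x * |α x| ^ p * Real.sign (α x)) := by
  obtain ⟨hp0, hp1⟩ := hp
  obtain ⟨hz0, hz1⟩ := hz
  obtain ⟨hφ0, hφz⟩ := hφbc
  intro α α' α''
  have hL : ∀ y : ℝ, HasDerivAt (fun t => c * φ₁' z * (t - z)) (c * φ₁' z) y := by
    intro y
    simpa using ((hasDerivAt_id y).sub_const z).const_mul (c * φ₁' z)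
  have hne : ∀ᵐ x : ℝ, x ≠ z := by
    refine ae_iff.mpr ?_
    simp only [ne_eq, not_not]
    have : {x : ℝ | x = z} = {z} := by ext; simp
    rw [this]
    exact measure_singleton z
  -- Part 1
  have part1 : ∀ x ∈ Icc (0:ℝ) 1, HasDerivAt α (α' x) x := by
    intro x hx
    simp only [α, α']
    rcases lt_trichotomy x z with h | h | h
    · rw [if_pos h.le]
      have h1 : HasDerivAt (fun t => c * φ₁ t) (c * φ₁' x) x :=
        (hd1 x ⟨hx.1, h.le⟩).const_mul c
      refine h1.congr_of_eventuallyEq ?_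
      filter_upwards [Iio_mem_nhds h] with y hy
      exact if_pos hy.le
    · subst h
      rw [if_pos le_rfl]
      have hleft : HasDerivWithinAt (fun t => if t ≤ x then c * φ₁ t else c * φ₁' x * (t - x))
          (c * φ₁' x) (Iic x) x := by
        have h1 : HasDerivAt (fun t => c * φ₁ t) (c * φ₁' x) x :=
          (hd1 x ⟨hz0.le, le_rfl⟩).const_mul c
        exact h1.hasDerivWithinAt.congr (fun y hy => if_pos hy) (if_pos le_rfl)
      have hright : HasDerivWithinAt (fun t => if t ≤ x then c * φ₁ t else c * φ₁' x * (t - x))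
          (c * φ₁' x) (Ici x) x := by
        refine (hL x).hasDerivWithinAt.congr (fun y hy => ?_) ?_
        · rcases eq_or_lt_of_le (Set.mem_Ici.mp hy) with rfl | hlt
          · simp [hφz]
          · rw [if_neg (not_le.2 hlt)]
        · simp [hφz]
      have := hleft.union hright
      rwa [Iic_union_Ici, hasDerivWithinAt_univ] at this
    · rw [if_neg (not_le.2 h)]
      refine (hL x).congr_of_eventuallyEq ?_
      filter_upwards [Ioi_mem_nhds h] with y hy
      exact if_neg (not_le.2 hy)
  refine ⟨part1, ?_, ?_, ?_, ?_, ?_⟩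
  · simp only [α', if_pos hz0.le]
    positivity
  · simp only [α', if_neg (not_le.2 hz1)]
    exact mul_neg_of_pos_of_neg hcpos hφ'z
  · -- Part 4
    intro x hx hxz
    simp only [α', α'']
    rcases lt_or_gt_of_ne hxz with h | h
    · rw [if_pos h.le]
      have h1 : HasDerivAt (fun t => c * φ₁' t) (c * φ₁'' x) x :=
        (hd2 x ⟨hx.1, h.le⟩).const_mul c
      refine h1.congr_of_eventuallyEq ?_
      filter_upwards [Iio_mem_nhds h] with y hy
      exact if_pos hy.le
    · rw [if_neg (not_le.2 h)]
      refine (hasDerivAt_const x (c * φ₁' z)).congr_of_eventuallyEq ?_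
      filter_upwards [Ioi_mem_nhds h] with y hy
      exact if_neg (not_le.2 hy)
  · -- Part 5 : boundedness of α''
    obtain ⟨C, hC⟩ := habd
    set C' := max C 0 with hC'def
    have hC0 : (0:ℝ) ≤ C' := le_max_right _ _
    have hCa : ∀ᵐ x ∂(volume.restrict (Ioo (0:ℝ) z)), |a x| ≤ C' :=
      ae_restrict_of_ae_restrict_of_subset (Ioo_subset_Ioo le_rfl hz1.le)
        (hC.mono fun x h => h.trans (le_max_left _ _))
    have hφcont : ContinuousOn φ₁ (Icc 0 z) :=
      fun x hx => (hd1 x hx).continuousAt.continuousWithinAt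
    obtain ⟨M, hM⟩ := isCompact_Icc.exists_bound_of_continuousOn hφcont
    have hM0 : (0:ℝ) ≤ M := le_trans (norm_nonneg _) (hM 0 ⟨le_rfl, hz0.le⟩)
    set K := μ₁ * C' * M with hKdef
    have hK0 : (0:ℝ) ≤ K := by positivity
    have hbd : ∀ᵐ x ∂(volume.restrict (Ioo (0:ℝ) z)), |φ₁'' x| ≤ K := by
      filter_upwards [hCa, heig, ae_restrict_mem measurableSet_Ioo] with x h1 h2 hxm
      have h3 : φ₁'' x = -(μ₁ * a x * φ₁ x) := by linarith
      rw [h3, abs_neg]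
      have hφM : |φ₁ x| ≤ M := by
        have := hM x (Ioo_subset_Icc_self hxm)
        rwa [Real.norm_eq_abs] at this
      calc |μ₁ * a x * φ₁ x| = μ₁ * |a x| * |φ₁ x| := by
            rw [abs_mul, abs_mul, abs_of_pos hμ₁]
        _ ≤ μ₁ * C' * M := by gcongr
    have hbdG : ∀ᵐ x : ℝ, x ∈ Ioo (0:ℝ) z → |φ₁'' x| ≤ K :=
      (ae_restrict_iff' measurableSet_Ioo).mp hbd
    -- Lipschitz bound for φ₁'
    have hlip : ∀ u v, u ∈ Icc (0:ℝ) z → v ∈ Icc (0:ℝ) z → u ≤ v →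
        |φ₁' v - φ₁' u| ≤ K * (v - u) := by
      intro u v hu hv huv
      have hderiv : ∀ t ∈ uIcc u v, HasDerivAt φ₁' (φ₁'' t) t := by
        intro t ht
        rw [uIcc_of_le huv] at ht
        exact hd2 t ⟨hu.1.trans ht.1, ht.2.trans hv.2⟩
      have haein : ∀ᵐ x ∂(volume.restrict (Ioc u v)), x ∈ Ioo (0:ℝ) z := by
        filter_upwards [ae_restrict_mem measurableSet_Ioc, ae_restrict_of_ae hne]
          with x hxm hxz
        exact ⟨lt_of_le_of_lt hu.1 hxm.1, lt_of_le_of_ne (hxm.2.trans hv.2) hxz⟩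
      have heqd : ∀ᵐ x ∂(volume.restrict (Ioc u v)), deriv φ₁' x = φ₁'' x := by
        filter_upwards [haein] with x hxm
        exact (hd2 x (Ioo_subset_Icc_self hxm)).deriv
      have hbdd : ∀ᵐ x ∂(volume.restrict (Ioc u v)), ‖φ₁'' x‖ ≤ K := by
        filter_upwards [haein, ae_restrict_of_ae hbdG] with x hxm h
        simpa [Real.norm_eq_abs] using h hxm
      have hint : IntervalIntegrable φ₁'' volume u v := by
        rw [intervalIntegrable_iff, uIoc_of_le huv]
        refine ⟨(measurable_deriv φ₁').aestronglyMeasurable.congr heqd, ?_⟩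
        exact HasFiniteIntegral.restrict_of_bounded K measure_Ioc_lt_top hbdd
      have hftc := intervalIntegral.integral_eq_sub_of_hasDerivAt hderiv hint
      rw [← hftc, intervalIntegral.integral_of_le huv]
      haveI : IsFiniteMeasure (volume.restrict (Ioc u v)) :=
        ⟨by rw [Measure.restrict_apply_univ]; exact measure_Ioc_lt_top⟩
      have hnorm := norm_integral_le_of_norm_le_const (μ := volume.restrict (Ioc u v))
        (f := φ₁'') hbdd
      rw [measureReal_restrict_apply_univ, Real.volume_real_Ioc,
        max_eq_left (by linarith)] at hnorm
      rwa [Real.norm_eq_abs] at hnorm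
    -- pointwise bound for φ₁'' on Icc 0 z
    have hptw : ∀ x ∈ Icc (0:ℝ) z, |φ₁'' x| ≤ K := by
      intro x hx
      rcases lt_or_eq_of_le hx.2 with hlt | rfl
      · have hdx : Tendsto (slope φ₁' x) (nhdsWithin x (Ioi x)) (nhds (φ₁'' x)) := by
          have h := ((hd2 x hx).hasDerivWithinAt (s := Ioi x))
          rw [hasDerivWithinAt_iff_tendsto_slope,
            Set.diff_singleton_eq_self (by simp)] at h
          exact h
        refine le_of_tendsto hdx.abs ?_
        filter_upwards [Ioc_mem_nhdsGT_of_mem ⟨le_rfl, hlt⟩] with y hy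
        have h1 := hlip x y hx ⟨hx.1.trans hy.1.le, hy.2⟩ hy.1.le
        have hyx : (0:ℝ) < y - x := sub_pos.2 hy.1
        rw [slope_def_field, abs_div, abs_of_pos hyx, div_le_iff₀ hyx]
        linarith [h1]
      · have hdx : Tendsto (slope φ₁' x) (nhdsWithin x (Iio x)) (nhds (φ₁'' x)) := by
          have h := ((hd2 x hx).hasDerivWithinAt (s := Iio x))
          rw [hasDerivWithinAt_iff_tendsto_slope,
            Set.diff_singleton_eq_self (by simp)] at h
          exact h
        refine le_of_tendsto hdx.abs ?_
        filter_upwards [Ico_mem_nhdsLT_of_mem ⟨hz0, le_rfl⟩] with y hy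
        have h1 := hlip y x ⟨hy.1, hy.2.le⟩ hx hy.2.le
        have hyx : (0:ℝ) < x - y := sub_pos.2 hy.2
        rw [slope_def_field, abs_div, abs_sub_comm y x, abs_of_pos hyx, div_le_iff₀ hyx]
        have h2 : |φ₁' y - φ₁' x| = |φ₁' x - φ₁' y| := abs_sub_comm _ _
        linarith [h1, h2.le]
    refine ⟨c * K, ?_⟩
    intro x hx
    simp only [α'']
    split_ifs with h
    · rw [abs_mul, abs_of_pos hcpos]
      exact mul_le_mul_of_nonneg_left (hptw x ⟨hx.1, h⟩) hcpos.le
    · simpa using by positivity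
  · -- Part 6 : differential inequality
    rw [ae_restrict_iff' measurableSet_Ioo]
    have hposG : ∀ᵐ x : ℝ, x ∈ Ioo (0:ℝ) z → 0 < a x :=
      (ae_restrict_iff' measurableSet_Ioo).mp hapos
    have hnegG : ∀ᵐ x : ℝ, x ∈ Ioo z 1 → a x < 0 :=
      (ae_restrict_iff' measurableSet_Ioo).mp haneg
    have heigG : ∀ᵐ x : ℝ, x ∈ Ioo (0:ℝ) z → -φ₁'' x = μ₁ * a x * φ₁ x :=
      (ae_restrict_iff' measurableSet_Ioo).mp heig
    filter_upwards [hposG, hnegG, heigG, hne] with x h1 h2 h3 h4 hx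
    simp only [α, α'']
    rcases lt_trichotomy x z with h | h | h
    · have hxm : x ∈ Ioo (0:ℝ) z := ⟨hx.1, h⟩
      have hax := h1 hxm
      have hφx := hφpos x hxm
      have hcφ : (0:ℝ) < c * φ₁ x := by positivity
      rw [if_pos h.le, if_pos h.le, abs_of_pos hcφ, Real.sign_of_pos hcφ, mul_one]
      have heq : -(c * φ₁'' x) = a x * (μ₁ * (c * φ₁ x)) := by
        have := h3 hxm
        nlinarith [this]
      rw [heq]
      have hkey : μ₁ * (c * φ₁ x) ≤ (c * φ₁ x) ^ p := by
        have hsmall := hcsmall x ⟨hxm.1.le, h.le⟩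
        have hsplit : (c * φ₁ x) ^ (1 - p) * (c * φ₁ x) ^ p = c * φ₁ x := by
          rw [← Real.rpow_add hcφ, sub_add_cancel, Real.rpow_one]
        have hppos : (0:ℝ) < (c * φ₁ x) ^ p := Real.rpow_pos_of_pos hcφ p
        nlinarith [hsmall, hsplit, hppos]
      exact mul_le_mul_of_nonneg_left hkey hax.le
    · exact absurd h h4
    · have hxm : x ∈ Ioo z 1 := ⟨h, hx.2⟩
      have hax := h2 hxm
      have hαneg : c * φ₁' z * (x - z) < 0 :=
        mul_neg_of_neg_of_pos (mul_neg_of_pos_of_neg hcpos hφ'z) (sub_pos.2 h)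
      rw [if_neg (not_le.2 h), if_neg (not_le.2 h), Real.sign_of_neg hαneg, neg_zero]
      have habs : (0:ℝ) < |c * φ₁' z * (x - z)| ^ p :=
        Real.rpow_pos_of_pos (abs_pos.2 hαneg.ne) p
      nlinarith [habs, hax]
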